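/- arXiv:1902.09182 — 2 statements merged into one kernel-verified Lean document; each statement's English description precedes it below -/
import Mathlib

section
/- Let A and B be finite graphs and let i : A → B be an induced subgraph inclusion that is a ×-homotopy equivalence with |V(A)| < |V(B)|. Suppose B cannot be reduced to A by any finite sequence of relative folds with respect to A. Then the cobase change of i is not always a ×-homotopy equivalence: there exist a graph C and a graph map f : A → C such that the cobase change i′ : C → G of i along f is not a ×-homotopy equivalence. -/
/-- A graph: vertex type `V` with a symmetric adjacency relation; loops are allowed. -/
structure LoopGraph (V : Type) : Type where
  adj : V → V → Prop
  symm : ∀ {x y : V}, adj x y → adj y x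

/-- A graph map: a vertex function preserving edges. -/
def IsGraphHom {V W : Type} (G : LoopGraph V) (H : LoopGraph W) (f : V → W) : Prop :=
  ∀ ⦃x y : V⦄, G.adj x y → H.adj (f x) (f y)

/-- The categorical product of graphs. -/
def LoopGraph.prod {V W : Type} (G : LoopGraph V) (H : LoopGraph W) : LoopGraph (V × W) where
  adj p q := G.adj p.1 q.1 ∧ H.adj p.2 q.2
  symm h := ⟨G.symm h.1, H.symm h.2⟩

/-- The graph `I_n` on vertices `{0,…,n}` with `i ~ j` iff `|i-j| ≤ 1` (all vertices looped). -/
def pathI (n : ℕ) : LoopGraph (Fin (n + 1)) where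
  adj i j := (i : ℕ) ≤ (j : ℕ) + 1 ∧ (j : ℕ) ≤ (i : ℕ) + 1
  symm h := ⟨h.2, h.1⟩

/-- `f` and `g` are ×-homotopic. -/
def Homotopic {V W : Type} (G : LoopGraph V) (H : LoopGraph W) (f g : V → W) : Prop :=
  ∃ (n : ℕ) (F : V × Fin (n + 1) → W),
    IsGraphHom (G.prod (pathI n)) H F ∧ (∀ a, F (a, 0) = f a) ∧ (∀ a, F (a, Fin.last n) = g a)

/-- `f` is a ×-homotopy equivalence. -/
def IsHtpyEquiv {V W : Type} (G : LoopGraph V) (H : LoopGraph W) (f : V → W) : Prop :=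
  IsGraphHom G H f ∧ ∃ g : W → V, IsGraphHom H G g ∧
    Homotopic G G (g ∘ f) id ∧ Homotopic H H (f ∘ g) id

/-- A graph is connected if any two vertices are joined by a path of edges. -/
def LoopGraph.Connected {V : Type} (G : LoopGraph V) : Prop :=
  ∀ x y : V, Relation.ReflTransGen G.adj x y

/-- `i : A → B` is an unfold: an induced-subgraph inclusion adding exactly one new vertex `v`
with `N(v) ⊆ N(i v')` for some vertex `v'` of `A`. -/
def IsUnfold {A B : Type} (GA : LoopGraph A) (GB : LoopGraph B) (i : A → B) : Prop :=
  Function.Injective i ∧ (∀ x y : A, GA.adj x y ↔ GB.adj (i x) (i y)) ∧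
  ∃ v : B, v ∉ Set.range i ∧ (∀ b : B, b ∉ Set.range i → b = v) ∧
    ∃ v' : A, ∀ b : B, GB.adj v b → GB.adj (i v') b

/-- Relation generating the pushout of `i : A → B` along `f : A → C`. -/
def pushoutRel {A B C : Type} (i : A → B) (f : A → C) : B ⊕ C → B ⊕ C → Prop :=
  fun x y => ∃ a : A, x = Sum.inl (i a) ∧ y = Sum.inr (f a)

/-- Vertex set of the pushout. -/
def Pushout {A B C : Type} (i : A → B) (f : A → C) : Type :=
  Quot (pushoutRel i f)

/-- Adjacency on a disjoint union. -/
def sumAdj {B C : Type} (GB : LoopGraph B) (GC : LoopGraph C) (x y : B ⊕ C) : Prop :=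
  (∃ b b', x = Sum.inl b ∧ y = Sum.inl b' ∧ GB.adj b b') ∨
  (∃ c c', x = Sum.inr c ∧ y = Sum.inr c' ∧ GC.adj c c')

/-- The pushout graph of `i : A → B` along `f : A → C`: classes are adjacent iff some
representatives are adjacent in `B` or in `C`. -/
def pushoutGraph {A B C : Type} (GB : LoopGraph B) (GC : LoopGraph C) (i : A → B) (f : A → C) :
    LoopGraph (Pushout i f) where
  adj x y := ∃ u v : B ⊕ C,
    Quot.mk (pushoutRel i f) u = x ∧ Quot.mk (pushoutRel i f) v = y ∧ sumAdj GB GC u v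
  symm := by
    rintro x y ⟨u, v, hu, hv, h⟩
    refine ⟨v, u, hv, hu, ?_⟩
    rcases h with ⟨b, b', rfl, rfl, hbb⟩ | ⟨c, c', rfl, rfl, hcc⟩
    · exact Or.inl ⟨b', b, rfl, rfl, GB.symm hbb⟩
    · exact Or.inr ⟨c', c, rfl, rfl, GC.symm hcc⟩

/-- The cobase change `C → B ⊔_A C` of `i` along `f`. -/
def cobase {A B C : Type} (i : A → B) (f : A → C) : C → Pushout i f :=
  fun c => Quot.mk (pushoutRel i f) (Sum.inr c)

/-- The map `a ↦ (a,0)` into the cylinder `A × I_n`. -/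
def cyl0 {A : Type} (n : ℕ) : A → A × Fin (n + 1) := fun a => (a, 0)

/-- The canonical map `(A × I_n) ⊔_i B → B × I_n`, induced by `(a,t) ↦ (i a, t)`, `b ↦ (b,0)`. -/
def cylJ {A B : Type} (i : A → B) (n : ℕ) : Pushout (cyl0 (A := A) n) i → B × Fin (n + 1) :=
  Quot.lift (Sum.elim (fun p => (i p.1, p.2)) (fun b => (b, (0 : Fin (n + 1)))))
    (by rintro x y ⟨a, rfl, rfl⟩; rfl)

/-- `i : A → B` has the homotopy extension property for homotopies of length `n`. -/
def HEP {A B : Type} (GA : LoopGraph A) (GB : LoopGraph B) (i : A → B) (n : ℕ) : Prop :=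
  ∀ (Z : Type) (GZ : LoopGraph Z) (f : A → Z) (g : B → Z),
    IsGraphHom GA GZ f → IsGraphHom GB GZ g → (∀ a, g (i a) = f a) →
    ∀ F : A × Fin (n + 1) → Z, IsGraphHom (GA.prod (pathI n)) GZ F → (∀ a, F (a, 0) = f a) →
    ∃ G : B × Fin (n + 1) → Z, IsGraphHom (GB.prod (pathI n)) GZ G ∧
      (∀ b, G (b, 0) = g b) ∧ (∀ a t, G (i a, t) = F (a, t))

/-- `FoldsTo G S`: the graph `G` can be reduced by a finite sequence of folds to the
induced subgraph on the vertex set `S`. -/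
inductive FoldsTo {V : Type} (G : LoopGraph V) : Set V → Prop
  | univ : FoldsTo G Set.univ
  | step {S : Set V} {v v' : V} : FoldsTo G S → v ∈ S → v' ∈ S → v ≠ v' →
      (∀ x ∈ S, G.adj v x → G.adj v' x) → FoldsTo G (S \ {v})

/-- `RelFoldsTo G A S`: `G` can be reduced to the induced subgraph on `S` by a finite
sequence of folds relative to `A` (never removing a vertex of `A`). -/
inductive RelFoldsTo {V : Type} (G : LoopGraph V) (A : Set V) : Set V → Prop
  | univ : RelFoldsTo G A Set.univ
  | step {S : Set V} {v v' : V} : RelFoldsTo G A S → v ∈ S → v ∉ A → v' ∈ S → v ≠ v' →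
      (∀ x ∈ S, G.adj v x → G.adj v' x) → RelFoldsTo G A (S \ {v})

/-- `p : X → Y` has the right lifting property with respect to every unfold. -/
def RLPunfolds {X Y : Type} (GX : LoopGraph X) (GY : LoopGraph Y) (p : X → Y) : Prop :=
  ∀ (A B : Type) (GA : LoopGraph A) (GB : LoopGraph B) (i : A → B), IsUnfold GA GB i →
    ∀ (f : A → X) (g : B → Y), IsGraphHom GA GX f → IsGraphHom GB GY g →
      (∀ a, p (f a) = g (i a)) →
      ∃ h : B → X, IsGraphHom GB GX h ∧ (∀ a, h (i a) = f a) ∧ ∀ b, p (h b) = g b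

/-- The graph `L_n`: the path `0 - 1 - ⋯ - n` with a loop at `0`. -/
def Lgraph (t : ℕ) : LoopGraph (Fin (t + 1)) where
  adj x y := ((x : ℕ) + 1 = (y : ℕ) ∨ (y : ℕ) + 1 = (x : ℕ)) ∨ ((x : ℕ) = 0 ∧ (y : ℕ) = 0)
  symm := by tauto

/-- The graph `I_0`: a single looped vertex. -/
def I0 : LoopGraph Unit where
  adj _ _ := True
  symm h := h

/-- The constant graph map `p_n : L_n → I_0`. -/
def pL (n : ℕ) : Fin (n + 1) → Unit := fun _ => ()

/-- An object of the category of finite graphs. -/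
structure FinGraph : Type where
  n : ℕ
  G : LoopGraph (Fin n)

/-- A class of morphisms in the category of finite graphs. -/
def MorClass : Type :=
  ∀ (A B : FinGraph), (Fin A.n → Fin B.n) → Prop

/-- `f : A → B` is a retract of `g : X → Y` in the arrow category. -/
def IsRetractOf (A B X Y : FinGraph) (f : Fin A.n → Fin B.n) (g : Fin X.n → Fin Y.n) : Prop :=
  ∃ (iA : Fin A.n → Fin X.n) (rA : Fin X.n → Fin A.n)
    (iB : Fin B.n → Fin Y.n) (rB : Fin Y.n → Fin B.n),
    IsGraphHom A.G X.G iA ∧ IsGraphHom X.G A.G rA ∧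
    IsGraphHom B.G Y.G iB ∧ IsGraphHom Y.G B.G rB ∧
    (∀ a, rA (iA a) = a) ∧ (∀ b, rB (iB b) = b) ∧
    (∀ a, g (iA a) = iB (f a)) ∧ (∀ x, f (rA x) = rB (g x))

/-- A class of morphisms is closed under retracts. -/
def RetractClosed (S : MorClass) : Prop :=
  ∀ (A B X Y : FinGraph) (f : Fin A.n → Fin B.n) (g : Fin X.n → Fin Y.n),
    IsGraphHom A.G B.G f → IsGraphHom X.G Y.G g →
    IsRetractOf A B X Y f g → S X Y g → S A B f

/-- `i` has the left lifting property with respect to `p` (in the category of finite graphs). -/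
def HasLift (A B X Y : FinGraph) (i : Fin A.n → Fin B.n) (p : Fin X.n → Fin Y.n) : Prop :=
  ∀ (f : Fin A.n → Fin X.n) (g : Fin B.n → Fin Y.n),
    IsGraphHom A.G X.G f → IsGraphHom B.G Y.G g → (∀ a, p (f a) = g (i a)) →
    ∃ h : Fin B.n → Fin X.n, IsGraphHom B.G X.G h ∧ (∀ a, h (i a) = f a) ∧ ∀ b, p (h b) = g b

/-- A model structure on the category of finite graphs: classes `W`, `Cof`, `Fib` of graph maps,
each closed under retracts, with two-out-of-three for `W`, the lifting axioms, and the two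
factorization axioms. -/
structure ModelStructure (W Cof Fib : MorClass) : Prop where
  w_hom : ∀ A B f, W A B f → IsGraphHom A.G B.G f
  c_hom : ∀ A B f, Cof A B f → IsGraphHom A.G B.G f
  f_hom : ∀ A B f, Fib A B f → IsGraphHom A.G B.G f
  w_retract : RetractClosed W
  c_retract : RetractClosed Cof
  f_retract : RetractClosed Fib
  two_of_three_comp : ∀ (A B D : FinGraph) (f : Fin A.n → Fin B.n) (g : Fin B.n → Fin D.n),
    IsGraphHom A.G B.G f → IsGraphHom B.G D.G g → W A B f → W B D g → W A D (g ∘ f)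
  two_of_three_right : ∀ (A B D : FinGraph) (f : Fin A.n → Fin B.n) (g : Fin B.n → Fin D.n),
    IsGraphHom A.G B.G f → IsGraphHom B.G D.G g → W A B f → W A D (g ∘ f) → W B D g
  two_of_three_left : ∀ (A B D : FinGraph) (f : Fin A.n → Fin B.n) (g : Fin B.n → Fin D.n),
    IsGraphHom A.G B.G f → IsGraphHom B.G D.G g → W B D g → W A D (g ∘ f) → W A B f
  lift_cw_f : ∀ (A B X Y : FinGraph) (i : Fin A.n → Fin B.n) (p : Fin X.n → Fin Y.n),
    Cof A B i → W A B i → Fib X Y p → HasLift A B X Y i p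
  lift_c_fw : ∀ (A B X Y : FinGraph) (i : Fin A.n → Fin B.n) (p : Fin X.n → Fin Y.n),
    Cof A B i → Fib X Y p → W X Y p → HasLift A B X Y i p
  fact_c_fw : ∀ (A B : FinGraph) (f : Fin A.n → Fin B.n), IsGraphHom A.G B.G f →
    ∃ (Z : FinGraph) (c : Fin A.n → Fin Z.n) (p : Fin Z.n → Fin B.n),
      Cof A Z c ∧ Fib Z B p ∧ W Z B p ∧ ∀ a, p (c a) = f a
  fact_cw_f : ∀ (A B : FinGraph) (f : Fin A.n → Fin B.n), IsGraphHom A.G B.G f →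
    ∃ (Z : FinGraph) (c : Fin A.n → Fin Z.n) (p : Fin Z.n → Fin B.n),
      Cof A Z c ∧ W A Z c ∧ Fib Z B p ∧ ∀ a, p (c a) = f a

/-- The class of ×-homotopy equivalences of finite graphs. -/
def Whe : MorClass := fun A B f => IsHtpyEquiv A.G B.G f

namespace Stmt14Aux

variable {A B : Type}

/-- Vertex type of the explicit pushout model: `B` plus a 5-cycle gadget for each `a : A`. -/
abbrev VT (A B : Type) : Type := B ⊕ A × Fin 5

/-- Cyclic adjacency on `Fin 5` (the unlooped 5-cycle). -/
def cyc5 (j k : Fin 5) : Prop := (j.val + 1) % 5 = k.val ∨ (k.val + 1) % 5 = j.val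

/-- The explicit pushout graph: `B` together with, for each `a`, an unlooped 5-cycle
attached to `i a` at the two consecutive cycle vertices `(a,0)` and `(a,1)`. -/
def GVg (GB : LoopGraph B) (i : A → B) : LoopGraph (VT A B) where
  adj x y :=
    match x, y with
    | .inl b, .inl b' => GB.adj b b'
    | .inl b, .inr (a, k) => b = i a ∧ (k = 0 ∨ k = 1)
    | .inr (a, k), .inl b => b = i a ∧ (k = 0 ∨ k = 1)
    | .inr (a, k), .inr (a', k') => a = a' ∧ cyc5 k k'
  symm := by
    intro x y h
    rcases x with b | ⟨a, k⟩ <;> rcases y with b' | ⟨a', k'⟩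
    · exact GB.symm h
    · exact h
    · exact h
    · exact ⟨h.1.symm, Or.symm h.2⟩

/-- The chosen graph `C`: `A` with the gadgets. -/
def GCg (GA : LoopGraph A) : LoopGraph (A ⊕ A × Fin 5) where
  adj x y :=
    match x, y with
    | .inl a, .inl a' => GA.adj a a'
    | .inl a, .inr (a', k) => a = a' ∧ (k = 0 ∨ k = 1)
    | .inr (a', k), .inl a => a = a' ∧ (k = 0 ∨ k = 1)
    | .inr (a, k), .inr (a', k') => a = a' ∧ cyc5 k k'
  symm := by
    intro x y h
    rcases x with a | ⟨a, k⟩ <;> rcases y with a' | ⟨a', k'⟩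
    · exact GA.symm h
    · exact h
    · exact h
    · exact ⟨h.1.symm, Or.symm h.2⟩

/-- The cobase change map in the explicit model. -/
def jm (i : A → B) : A ⊕ A × Fin 5 → VT A B := Sum.elim (fun a => Sum.inl (i a)) Sum.inr

/-- The "protected" set: image of `C` in the explicit pushout. -/
def Ts (i : A → B) : Set (VT A B) :=
  {x | (∃ a, x = Sum.inl (i a)) ∨ (∃ y, x = Sum.inr y)}

lemma inl_mem_Ts {i : A → B} {b : B} : Sum.inl b ∈ Ts i ↔ b ∈ Set.range i := by
  constructor
  · rintro (⟨a, ha⟩ | ⟨y, hy⟩)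
    · exact ⟨a, (Sum.inl.inj ha).symm⟩
    · exact absurd hy (by simp)
  · rintro ⟨a, rfl⟩; exact Or.inl ⟨a, rfl⟩

lemma inr_mem_Ts {i : A → B} (y : A × Fin 5) : (Sum.inr y : VT A B) ∈ Ts i :=
  Or.inr ⟨y, rfl⟩

-- Fin 5 decidable facts
lemma c5_next : ∀ j : Fin 5, cyc5 j (j + 1) := by unfold cyc5; decide
lemma c5_prev : ∀ j : Fin 5, cyc5 j (j + 4) := by unfold cyc5; decide
lemma c5_pin : ∀ j l : Fin 5, cyc5 l (j + 1) → cyc5 l (j + 4) → l = j := by unfold cyc5; decide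
lemma c5_att : ∀ j : Fin 5, ¬((j + 1 = 0 ∨ j + 1 = 1) ∧ (j + 4 = 0 ∨ j + 4 = 1)) := by decide
lemma c5_01 : ∀ l : Fin 5, ¬(cyc5 l 0 ∧ cyc5 l 1) := by unfold cyc5; decide

end Stmt14Aux
namespace Stmt14Aux

variable {A B : Type}

/-- State for the main fold-extraction induction: `S` is the current vertex set of the
(explicit) pushout, and `f t` are the slices of a homotopy of length `n` on the induced
subgraph on `S`, relative to the protected set `Ts i`, ending at the identity and starting
at a map into `Ts i`; moreover `S ∩ B` has been reached from `B` by relative folds. -/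
structure St (GB : LoopGraph B) (i : A → B) (S : Set (VT A B)) (n : ℕ)
    (f : ℕ → VT A B → VT A B) : Prop where
  hT : Ts i ⊆ S
  hmem : ∀ t, t ≤ n → ∀ x ∈ S, f t x ∈ S
  hhom : ∀ t, t ≤ n → ∀ x y, x ∈ S → y ∈ S →
    (GVg GB i).adj x y → (GVg GB i).adj (f t x) (f t y)
  hstep : ∀ t, t < n → ∀ x y, x ∈ S → y ∈ S →
    (GVg GB i).adj x y → (GVg GB i).adj (f t x) (f (t + 1) y)
  hend : ∀ x ∈ S, f n x = x
  hstart : ∀ x ∈ S, f 0 x ∈ Ts i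
  hfix : ∀ t, t ≤ n → ∀ x ∈ Ts i, f t x = x
  hrel : RelFoldsTo GB (Set.range i) {b | Sum.inl b ∈ S}

/-- Pinning: any homotopy into `GVg` whose final slice is the identity fixes the protected
set `Ts i` pointwise at all times. -/
lemma pin (GB : LoopGraph B) (i : A → B) (n : ℕ) (H : VT A B × Fin (n + 1) → VT A B)
    (Hhom : IsGraphHom ((GVg GB i).prod (pathI n)) (GVg GB i) H)
    (Hlast : ∀ x, H (x, Fin.last n) = x) :
    ∀ s : ℕ, ∀ x ∈ Ts i, H (x, ⟨n - s, by omega⟩) = x := by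
  intro s
  induction s with
  | zero =>
    intro x hx
    have h : (⟨n - 0, by omega⟩ : Fin (n + 1)) = Fin.last n := by
      apply Fin.ext; simp [Fin.last]
    rw [h]; exact Hlast x
  | succ s ih =>
    by_cases hs : n ≤ s
    · intro x hx
      have h : (⟨n - (s + 1), by omega⟩ : Fin (n + 1)) = ⟨n - s, by omega⟩ := by
        apply Fin.ext; simp; omega
      rw [h]; exact ih x hx
    · push_neg at hs
      intro x hx
      have hstep : ∀ y, (GVg GB i).adj x y →
          (GVg GB i).adj (H (x, ⟨n - (s+1), by omega⟩)) (H (y, ⟨n - s, by omega⟩)) := by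
        intro y hadj
        apply Hhom
        exact ⟨hadj, by simp [pathI]; omega, by simp [pathI]; omega⟩
      rcases hx with ⟨a, rfl⟩ | ⟨⟨a, j⟩, rfl⟩
      · -- x = inl (i a); use the gadget vertices (a,0) and (a,1)
        have h0 := hstep (Sum.inr (a, 0)) ⟨rfl, Or.inl rfl⟩
        have h1 := hstep (Sum.inr (a, 1)) ⟨rfl, Or.inr rfl⟩
        rw [ih (Sum.inr (a, 0)) (inr_mem_Ts _)] at h0
        rw [ih (Sum.inr (a, 1)) (inr_mem_Ts _)] at h1
        set z := H (Sum.inl (i a), ⟨n - (s+1), by omega⟩) with hz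
        rcases z with c | ⟨a', l⟩
        · rw [show c = i a from h0.1]
        · exact absurd ⟨h0.2, h1.2⟩ (c5_01 l)
      · -- x = inr (a, j); use the two cycle neighbours
        have h0 := hstep (Sum.inr (a, j + 1)) ⟨rfl, c5_next j⟩
        have h1 := hstep (Sum.inr (a, j + 4)) ⟨rfl, c5_prev j⟩
        rw [ih (Sum.inr (a, j + 1)) (inr_mem_Ts _)] at h0
        rw [ih (Sum.inr (a, j + 4)) (inr_mem_Ts _)] at h1
        set z := H (Sum.inr (a, j), ⟨n - (s+1), by omega⟩) with hz
        rcases z with c | ⟨a', l⟩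
        · exact absurd ⟨h0.2, h1.2⟩ (c5_att j)
        · rw [show a' = a from h0.1, show l = j from c5_pin j l h0.2 h1.2]

end Stmt14Aux
namespace Stmt14Aux

variable {A B : Type}

open Classical in
/-- Replace `v` by `w`, leave everything else alone. -/
noncomputable def subst1 {α : Type} (v w y : α) : α := if y = v then w else y

lemma subst1_eq {α : Type} (v w : α) : subst1 v w v = w := by simp [subst1]

lemma subst1_ne {α : Type} {v y : α} (w : α) (h : y ≠ v) : subst1 v w y = y := by
  simp [subst1, h]

/-- Folding away a dominated vertex `Sum.inl b ∉ Ts i` preserves the induction state. -/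
lemma fold_step (GB : LoopGraph B) (i : A → B) (S : Set (VT A B)) (n : ℕ)
    (f : ℕ → VT A B → VT A B) (st : St GB i S n f) (b w : B)
    (hbS : Sum.inl b ∈ S) (hbni : b ∉ Set.range i)
    (hwS : (Sum.inl w : VT A B) ∈ S) (hne : (Sum.inl w : VT A B) ≠ Sum.inl b)
    (hdom : ∀ x ∈ S, (GVg GB i).adj (Sum.inl b) x → (GVg GB i).adj (Sum.inl w) x) :
    St GB i (S \ {Sum.inl b}) n
      (fun t x => subst1 (Sum.inl b) (Sum.inl w) (f t x)) := by
  have hvnT : (Sum.inl b : VT A B) ∉ Ts i := fun h => hbni (inl_mem_Ts.mp h)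
  have hq_mem : ∀ y ∈ S, subst1 (Sum.inl b) (Sum.inl w) y ∈ S \ {Sum.inl b} := by
    intro y hy
    by_cases h : y = Sum.inl b
    · rw [h, subst1_eq]; exact ⟨hwS, hne⟩
    · rw [subst1_ne _ h]; exact ⟨hy, h⟩
  have hq_adj : ∀ p q, p ∈ S → q ∈ S → (GVg GB i).adj p q →
      (GVg GB i).adj (subst1 (Sum.inl b) (Sum.inl w) p) (subst1 (Sum.inl b) (Sum.inl w) q) := by
    intro p q hp hq hadj
    by_cases hpv : p = Sum.inl b <;> by_cases hqv : q = Sum.inl b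
    · subst hpv; subst hqv
      rw [subst1_eq]
      have h1 : (GVg GB i).adj (Sum.inl w) (Sum.inl b) := hdom _ hp hadj
      have h2 : (GVg GB i).adj (Sum.inl w) (Sum.inl w) :=
        hdom (Sum.inl w) hwS ((GVg GB i).symm h1)
      exact h2
    · subst hpv; rw [subst1_eq, subst1_ne _ hqv]; exact hdom q hq hadj
    · subst hqv; rw [subst1_eq, subst1_ne _ hpv]
      exact (GVg GB i).symm (hdom p hp ((GVg GB i).symm hadj))
    · rw [subst1_ne _ hpv, subst1_ne _ hqv]; exact hadj
  refine ⟨?_, ?_, ?_, ?_, ?_, ?_, ?_, ?_⟩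
  · intro x hx
    exact ⟨st.hT hx, fun h => hvnT (by rw [show (Sum.inl b : VT A B) = x from h.symm]; exact hx)⟩
  · intro t ht x hx; exact hq_mem _ (st.hmem t ht x hx.1)
  · intro t ht x y hx hy hadj
    exact hq_adj _ _ (st.hmem t ht x hx.1) (st.hmem t ht y hy.1)
      (st.hhom t ht x y hx.1 hy.1 hadj)
  · intro t ht x y hx hy hadj
    exact hq_adj _ _ (st.hmem t (by omega) x hx.1) (st.hmem (t+1) (by omega) y hy.1)
      (st.hstep t ht x y hx.1 hy.1 hadj)
  · intro x hx; rw [st.hend x hx.1]; exact subst1_ne _ hx.2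
  · intro x hx
    have h := st.hstart x hx.1
    rw [subst1_ne _ (fun he => hvnT (by rw [← he]; exact h))]; exact h
  · intro t ht x hx
    rw [st.hfix t ht x hx]
    exact subst1_ne _ (fun he => hvnT (by rw [← he]; exact hx))
  · have hset : {c : B | Sum.inl c ∈ S \ {Sum.inl b}} =
        {c : B | Sum.inl c ∈ S} \ {b} := by
      ext c
      simp only [Set.mem_diff, Set.mem_setOf_eq, Set.mem_singleton_iff, Sum.inl.injEq]
    rw [hset]
    refine RelFoldsTo.step st.hrel hbS hbni hwS ?_ ?_
    · intro h; exact hne (by rw [← h])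
    · intro c hc hadj
      exact hdom (Sum.inl c) hc hadj

/-- A surjective self-map of a finite induced subgraph has an "inverse up to iteration"
which is again a graph map, fixes whatever the map fixes pointwise, and is a genuine
two-sided inverse on the subgraph. -/
lemma exists_inv {V' : Type} [Finite V'] (G : LoopGraph V') (S : Set V') (h : V' → V')
    (hmem : ∀ x ∈ S, h x ∈ S)
    (hhom : ∀ x y, x ∈ S → y ∈ S → G.adj x y → G.adj (h x) (h y))
    (K : Set V') (hKS : K ⊆ S) (hKfix : ∀ x ∈ K, h x = x)
    (hsurj : ∀ y ∈ S, ∃ x ∈ S, h x = y) :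
    ∃ g' : V' → V', (∀ y ∈ S, g' y ∈ S) ∧
      (∀ x y, x ∈ S → y ∈ S → G.adj x y → G.adj (g' x) (g' y)) ∧
      (∀ x ∈ K, g' x = x) ∧ (∀ x ∈ S, g' (h x) = x) := by
  classical
  set e : S → S := fun x => ⟨h x.1, hmem x.1 x.2⟩ with he
  have hesurj : Function.Surjective e := by
    rintro ⟨y, hy⟩
    obtain ⟨x, hx, hxy⟩ := hsurj y hy
    exact ⟨⟨x, hx⟩, Subtype.ext hxy⟩
  have heinj : Function.Injective e := Finite.injective_iff_surjective.mpr hesurj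
  -- find d ≥ 1 with e^[d] = id
  obtain ⟨p, q, hpq, hiter⟩ :=
    Finite.exists_ne_map_eq_of_infinite (fun m : ℕ => e^[m])
  have key : ∀ p q : ℕ, p < q → e^[p] = e^[q] → ∃ d, 1 ≤ d ∧ e^[d] = id := by
    intro p q hlt heq
    refine ⟨q - p, by omega, ?_⟩
    funext x
    have hinjp : Function.Injective (e^[p]) := Function.Injective.iterate heinj p
    apply hinjp
    have : e^[p] (e^[q-p] x) = e^[p + (q-p)] x := (Function.iterate_add_apply e p (q-p) x).symm
    rw [this, show p + (q - p) = q by omega, ← heq]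
    rfl
  have hd : ∃ d, 1 ≤ d ∧ e^[d] = id := by
    rcases lt_or_gt_of_ne hpq with h' | h'
    · exact key _ _ h' hiter
    · exact key _ _ h' hiter.symm
  obtain ⟨d, hd1, hdid⟩ := hd
  set ι : S → S := e^[d-1] with hι
  have hinv1 : ∀ x : S, ι (e x) = x := by
    intro x
    have h1 : ι (e x) = e^[d - 1 + 1] x := (Function.iterate_succ_apply e (d-1) x).symm
    rw [h1, show d - 1 + 1 = d by omega, hdid]; rfl
  have hiterhom : ∀ m : ℕ, ∀ x y : S, G.adj x.1 y.1 → G.adj (e^[m] x).1 (e^[m] y).1 := by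
    intro m
    induction m with
    | zero => intro x y hxy; exact hxy
    | succ m ih =>
      intro x y hxy
      rw [Function.iterate_succ_apply', Function.iterate_succ_apply']
      exact hhom _ _ (e^[m] x).2 (e^[m] y).2 (ih x y hxy)
  have hiterfix : ∀ m : ℕ, ∀ x : S, x.1 ∈ K → e^[m] x = x := by
    intro m
    induction m with
    | zero => intro x _; rfl
    | succ m ih =>
      intro x hx
      rw [Function.iterate_succ_apply, show e x = x from Subtype.ext (hKfix x.1 hx)]
      exact ih x hx
  refine ⟨fun y => if hy : y ∈ S then (ι ⟨y, hy⟩).1 else y, ?_, ?_, ?_, ?_⟩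
  · intro y hy; dsimp only; rw [dif_pos hy]; exact (ι ⟨y, hy⟩).2
  · intro x y hx hy hxy
    dsimp only; rw [dif_pos hx, dif_pos hy]
    exact hiterhom (d-1) ⟨x, hx⟩ ⟨y, hy⟩ hxy
  · intro x hx
    dsimp only; rw [dif_pos (hKS hx)]
    rw [show ι ⟨x, hKS hx⟩ = ⟨x, hKS hx⟩ from hiterfix (d-1) _ hx]
  · intro x hx
    dsimp only; rw [dif_pos (hmem x hx)]
    have h2 : (⟨h x, hmem x hx⟩ : S) = e ⟨x, hx⟩ := rfl
    rw [h2, hinv1]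

end Stmt14Aux
namespace Stmt14Aux

variable {A B : Type}

lemma relFolds_superset {V : Type} {G : LoopGraph V} {Ai S : Set V}
    (h : RelFoldsTo G Ai S) : Ai ⊆ S := by
  induction h with
  | univ => exact Set.subset_univ _
  | @step S' v v' hS hv hvA hv'S hne hdom ih =>
    intro x hx
    exact ⟨ih hx, fun hxv => hvA (by rwa [← Set.eq_of_mem_singleton hxv])⟩

/-- A fold sequence yields a graph-map retraction of `B` onto the reached set. -/
lemma rho_exists {G : LoopGraph B} {Ai S : Set B} (h : RelFoldsTo G Ai S) :
    ∃ ρ : B → B, (∀ x y, G.adj x y → G.adj (ρ x) (ρ y)) ∧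
      (∀ x, ρ x ∈ S) ∧ (∀ x ∈ S, ρ x = x) := by
  induction h with
  | univ => exact ⟨id, fun x y h => h, fun x => Set.mem_univ x, fun x _ => rfl⟩
  | @step S' v v' hS hv hvA hv'S hne hdom ih =>
    obtain ⟨ρ, ρhom, ρmem, ρfix⟩ := ih
    refine ⟨fun x => subst1 v v' (ρ x), ?_, ?_, ?_⟩
    · intro x y hxy
      dsimp only
      have hp := ρmem x
      have hq := ρmem y
      have hadj := ρhom x y hxy
      by_cases hxv : ρ x = v <;> by_cases hyv : ρ y = v
      · rw [hxv, hyv] at hadj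
        rw [hxv, hyv, subst1_eq]
        have h1 : G.adj v' v := hdom v hv hadj
        exact hdom v' hv'S (G.symm h1)
      · rw [subst1_ne _ hyv, hxv, subst1_eq]
        rw [hxv] at hadj
        exact hdom _ hq hadj
      · rw [subst1_ne _ hxv, hyv, subst1_eq]
        rw [hyv] at hadj
        exact G.symm (hdom _ hp (G.symm hadj))
      · rw [subst1_ne _ hxv, subst1_ne _ hyv]; exact hadj
    · intro x
      dsimp only
      by_cases hxv : ρ x = v
      · rw [hxv, subst1_eq]; exact ⟨hv'S, fun h => hne (Set.eq_of_mem_singleton h).symm⟩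
      · rw [subst1_ne _ hxv]; exact ⟨ρmem x, hxv⟩
    · intro x hx
      dsimp only
      rw [ρfix x hx.1, subst1_ne _ hx.2]

/-- The crisis configuration: a vertex `b ∉ range i` whose only surviving neighbour is a
vertex `i a` having no other surviving neighbour.  This contradicts `i ∘ g ≃ id`. -/
lemma crisis (GB : LoopGraph B) (i : A → B) (g : B → A)
    (hBB : Homotopic GB GB (i ∘ g) id)
    (SB : Set B) (hfold : RelFoldsTo GB (Set.range i) SB)
    (b : B) (a : A) (hbS : b ∈ SB) (hbni : b ∉ Set.range i)
    (hadj : GB.adj b (i a))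
    (cr3 : ∀ c ∈ SB, GB.adj c (i a) → c = b)
    (cr4 : ∀ c ∈ SB, GB.adj b c → c = i a) : False := by
  obtain ⟨ρ, ρhom, ρmem, ρfix⟩ := rho_exists hfold
  have hAiS : Set.range i ⊆ SB := relFolds_superset hfold
  obtain ⟨m, K, Khom, K0, Km⟩ := hBB
  have main : ∀ t : ℕ, t ≤ m →
      ρ (K (b, ⟨m - t, by omega⟩)) = b ∧ ρ (K (i a, ⟨m - t, by omega⟩)) = i a := by
    intro t
    induction t with
    | zero =>
      intro _
      have h : (⟨m - 0, by omega⟩ : Fin (m + 1)) = Fin.last m := by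
        apply Fin.ext; simp [Fin.last]
      rw [h, Km, Km]
      exact ⟨ρfix b hbS, ρfix (i a) (hAiS ⟨a, rfl⟩)⟩
    | succ t ih =>
      intro ht
      have ih' := ih (by omega)
      constructor
      · have hE : GB.adj (K (b, ⟨m - (t+1), by omega⟩)) (K (i a, ⟨m - t, by omega⟩)) := by
          apply Khom
          exact ⟨hadj, by simp [pathI]; omega, by simp [pathI]; omega⟩
        have hE2 := ρhom _ _ hE
        rw [ih'.2] at hE2
        exact cr3 _ (ρmem _) hE2
      · have hE : GB.adj (K (i a, ⟨m - (t+1), by omega⟩)) (K (b, ⟨m - t, by omega⟩)) := by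
          apply Khom
          exact ⟨GB.symm hadj, by simp [pathI]; omega, by simp [pathI]; omega⟩
        have hE2 := ρhom _ _ hE
        rw [ih'.1] at hE2
        exact cr4 _ (ρmem _) (GB.symm hE2)
  have h0 := (main m le_rfl).1
  have hz : (⟨m - m, by omega⟩ : Fin (m + 1)) = 0 := by
    apply Fin.ext; simp
  rw [hz, K0, Function.comp_apply] at h0
  have hfix2 : ρ (i (g b)) = i (g b) := ρfix _ (hAiS ⟨g b, rfl⟩)
  rw [hfix2] at h0
  exact hbni ⟨g b, h0⟩

end Stmt14Aux
namespace Stmt14Aux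

variable {A B : Type}

/-- The main induction: from a state, derive a contradiction (with `hnofold`). -/
lemma core [Fintype A] [Fintype B] (GB : LoopGraph B) (i : A → B) (g : B → A)
    (hBB : Homotopic GB GB (i ∘ g) id)
    (hnofold : ¬ RelFoldsTo GB (Set.range i) (Set.range i)) :
    ∀ (N : ℕ) (S : Set (VT A B)), S.ncard = N →
      ∀ (n : ℕ) (f : ℕ → VT A B → VT A B), St GB i S n f → False := by
  intro N
  induction N using Nat.strong_induction_on with
  | _ N ihN =>
  intro S hSN n
  induction n with
  | zero =>
    intro f st
    apply hnofold
    have hST : S ⊆ Ts i := by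
      intro x hx
      have h1 := st.hend x hx
      have h2 := st.hstart x hx
      rwa [h1] at h2
    have hset : {b : B | Sum.inl b ∈ S} = Set.range i := by
      ext b
      constructor
      · intro hb; exact inl_mem_Ts.mp (hST hb)
      · intro hb; exact st.hT (inl_mem_Ts.mpr hb)
    have h3 := st.hrel
    rwa [hset] at h3
  | succ n ihn =>
    intro f st
    classical
    by_cases hsurj : ∀ y ∈ S, ∃ x ∈ S, f n x = y
    · -- last slice surjective: invert it and shorten the homotopy
      obtain ⟨g', hg'mem, hg'hom, hg'fix, hg'inv⟩ :=
        exists_inv (GVg GB i) S (f n) (st.hmem n (by omega))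
          (st.hhom n (by omega)) (Ts i) st.hT
          (fun x hx => st.hfix n (by omega) x hx) hsurj
      apply ihn (fun t x => g' (f t x))
      refine ⟨st.hT, ?_, ?_, ?_, ?_, ?_, ?_, st.hrel⟩
      · intro t ht x hx
        exact hg'mem _ (st.hmem t (by omega) x hx)
      · intro t ht x y hx hy hadj
        exact hg'hom _ _ (st.hmem t (by omega) x hx) (st.hmem t (by omega) y hy)
          (st.hhom t (by omega) x y hx hy hadj)
      · intro t ht x y hx hy hadj
        exact hg'hom _ _ (st.hmem t (by omega) x hx) (st.hmem (t+1) (by omega) y hy)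
          (st.hstep t (by omega) x y hx hy hadj)
      · intro x hx
        exact hg'inv x hx
      · intro x hx
        have h1 := st.hstart x hx
        rw [hg'fix _ h1]; exact h1
      · intro t ht x hx
        rw [st.hfix t (by omega) x hx]
        exact hg'fix x hx
    · -- some vertex is missing from the image of the last slice
      push_neg at hsurj
      obtain ⟨v, hvS, hvmiss⟩ := hsurj
      have hvT : v ∉ Ts i := fun hT => hvmiss v hvS (st.hfix n (by omega) v hT)
      rcases hvb : v with b | y
      · rw [hvb] at hvS hvmiss hvT
        have hbni : b ∉ Set.range i := fun hr => hvT (inl_mem_Ts.mpr hr)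
        have hdom : ∀ x ∈ S, (GVg GB i).adj (Sum.inl b) x →
            (GVg GB i).adj (f n (Sum.inl b)) x := by
          intro x hx hadj
          have h1 := st.hstep n (by omega) (Sum.inl b) x hvS hx hadj
          rwa [st.hend x hx] at h1
        have hw0S : f n (Sum.inl b) ∈ S := st.hmem n (by omega) _ hvS
        have hw0ne : f n (Sum.inl b) ≠ Sum.inl b := hvmiss _ hvS
        have hcard : ∀ c : B, Sum.inl c ∈ S → (S \ {Sum.inl b}).ncard < N := by
          intro _ _
          rw [← hSN]
          exact Set.ncard_diff_singleton_lt_of_mem hvS (Set.toFinite S)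
        rcases hw0 : f n (Sum.inl b) with b' | ⟨a, k⟩
        · -- fold target inside B
          rw [hw0] at hdom hw0S hw0ne
          exact ihN _ (hcard b hvS) _ rfl (n+1) _
            (fold_step GB i S (n+1) f st b b' hvS hbni hw0S hw0ne hdom)
        · -- fold target in a gadget: only possible neighbour of `b` is `i a`
          rw [hw0] at hdom hw0S
          have hNv : ∀ x ∈ S, (GVg GB i).adj (Sum.inl b) x → x = Sum.inl (i a) := by
            intro x hx hadj
            have h2 := hdom x hx hadj
            rcases x with c | ⟨a', k'⟩
            · rw [show c = i a from h2.1]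
            · exact absurd ⟨a', hadj.1.symm⟩ hbni
          by_cases hex : ∃ x ∈ S, (GVg GB i).adj (Sum.inl b) x
          · obtain ⟨x₀, hx₀S, hx₀a⟩ := hex
            have hx₀ := hNv x₀ hx₀S hx₀a
            rw [hx₀] at hx₀a
            by_cases hw : ∃ c, Sum.inl c ∈ S ∧ c ≠ b ∧ GB.adj c (i a)
            · obtain ⟨c, hcS, hcb, hcadj⟩ := hw
              have hdom' : ∀ x ∈ S, (GVg GB i).adj (Sum.inl b) x →
                  (GVg GB i).adj (Sum.inl c) x := by
                intro x hx ha
                rw [hNv x hx ha]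
                exact hcadj
              exact ihN _ (hcard b hvS) _ rfl (n+1) _
                (fold_step GB i S (n+1) f st b c hvS hbni hcS
                  (fun h => hcb (Sum.inl.inj h)) hdom')
            · -- CRISIS
              push_neg at hw
              refine crisis GB i g hBB {c | Sum.inl c ∈ S} st.hrel b a hvS hbni hx₀a ?_ ?_
              · intro c hc hadj
                by_contra hne
                exact hw c hc hne hadj
              · intro c hc hadj
                exact Sum.inl.inj (hNv (Sum.inl c) hc hadj)
          · -- no neighbours at all: fold onto `i a`
            have hiaS : Sum.inl (i a) ∈ S := st.hT (Or.inl ⟨a, rfl⟩)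
            have hiane : (Sum.inl (i a) : VT A B) ≠ Sum.inl b :=
              fun h => hbni ⟨a, (Sum.inl.inj h)⟩
            have hdom' : ∀ x ∈ S, (GVg GB i).adj (Sum.inl b) x →
                (GVg GB i).adj (Sum.inl (i a)) x :=
              fun x hx ha => absurd ⟨x, hx, ha⟩ hex
            exact ihN _ (hcard b hvS) _ rfl (n+1) _
              (fold_step GB i S (n+1) f st b (i a) hvS hbni hiaS hiane hdom')
      · exact absurd (hvb ▸ inr_mem_Ts y) hvT

end Stmt14Aux
namespace Stmt14Aux

variable {A B : Type}

lemma no_hje [Fintype A] [Fintype B] (GA : LoopGraph A) (GB : LoopGraph B) (i : A → B)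
    (g : B → A) (hBB : Homotopic GB GB (i ∘ g) id)
    (hnofold : ¬ RelFoldsTo GB (Set.range i) (Set.range i)) :
    ¬ IsHtpyEquiv (GCg GA) (GVg GB i) (jm i) := by
  rintro ⟨hj, r, hr, _, hVV⟩
  obtain ⟨n, H, Hhom, H0, Hlast⟩ := hVV
  -- the slices of the homotopy
  set f : ℕ → VT A B → VT A B := fun t x => H (x, ⟨min t n, by omega⟩) with hf
  have hfix : ∀ t, t ≤ n → ∀ x ∈ Ts i, f t x = x := by
    intro t ht x hx
    have h1 := pin GB i n H Hhom Hlast (n - t) x hx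
    have h2 : (⟨n - (n - t), by omega⟩ : Fin (n+1)) = ⟨min t n, by omega⟩ := by
      apply Fin.ext; simp; omega
    rwa [h2] at h1
  apply core GB i g hBB hnofold (Set.univ : Set (VT A B)).ncard Set.univ rfl n f
  have hbuniv : {b : B | Sum.inl b ∈ (Set.univ : Set (VT A B))} = Set.univ := by
    ext b; simp
  refine ⟨Set.subset_univ _, fun _ _ _ _ => Set.mem_univ _, ?_, ?_, ?_, ?_, hfix, ?_⟩
  · intro t ht x y _ _ hadj
    apply Hhom
    exact ⟨hadj, by simp [pathI], by simp [pathI]⟩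
  · intro t ht x y _ _ hadj
    apply Hhom
    refine ⟨hadj, ?_, ?_⟩ <;> simp [pathI] <;> omega
  · intro x _
    have h2 : (⟨min n n, by omega⟩ : Fin (n+1)) = Fin.last n := by
      apply Fin.ext; simp [Fin.last]
    rw [hf]; dsimp only; rw [h2]; exact Hlast x
  · intro x _
    have h2 : (⟨min 0 n, by omega⟩ : Fin (n+1)) = 0 := by
      apply Fin.ext; simp
    rw [hf]; dsimp only; rw [h2, H0]
    rw [Function.comp_apply]
    rcases hrx : r x with a | y
    · exact Or.inl ⟨a, rfl⟩
    · exact Or.inr ⟨y, rfl⟩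
  · rw [hbuniv]; exact RelFoldsTo.univ

end Stmt14Aux
namespace Stmt14Aux

variable {A B : Type}

/-- From the pushout to the explicit model. -/
def phi (GA : LoopGraph A) (GB : LoopGraph B) (i : A → B) :
    Pushout i (Sum.inl : A → A ⊕ A × Fin 5) → VT A B :=
  Quot.lift (Sum.elim (fun b => Sum.inl b) (jm i))
    (by rintro x y ⟨a, rfl, rfl⟩; rfl)

/-- From the explicit model to the pushout. -/
def psi (GA : LoopGraph A) (GB : LoopGraph B) (i : A → B) :
    VT A B → Pushout i (Sum.inl : A → A ⊕ A × Fin 5) :=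
  fun x => Quot.mk _ (Sum.elim (fun b => Sum.inl b) (fun y => Sum.inr (Sum.inr y)) x)

lemma phi_psi (GA : LoopGraph A) (GB : LoopGraph B) (i : A → B) :
    ∀ x, phi GA GB i (psi GA GB i x) = x := by
  rintro (b | y) <;> rfl

lemma cobase_eq (GA : LoopGraph A) (GB : LoopGraph B) (i : A → B) :
    ∀ c, cobase i (Sum.inl : A → A ⊕ A × Fin 5) c = psi GA GB i (jm i c) := by
  rintro (a | y)
  · exact (Quot.sound ⟨a, rfl, rfl⟩).symm
  · rfl

lemma phi_cobase (GA : LoopGraph A) (GB : LoopGraph B) (i : A → B) :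
    ∀ c, phi GA GB i (cobase i (Sum.inl : A → A ⊕ A × Fin 5) c) = jm i c := by
  rintro (a | y) <;> rfl

lemma psi_hom (GA : LoopGraph A) (GB : LoopGraph B) (i : A → B) :
    IsGraphHom (GVg GB i) (pushoutGraph GB (GCg GA) i Sum.inl) (psi GA GB i) := by
  rintro (b | ⟨a, k⟩) (b' | ⟨a', k'⟩) h
  · exact ⟨Sum.inl b, Sum.inl b', rfl, rfl, Or.inl ⟨b, b', rfl, rfl, h⟩⟩
  · refine ⟨Sum.inr (Sum.inl a'), Sum.inr (Sum.inr (a', k')), ?_, rfl,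
      Or.inr ⟨Sum.inl a', Sum.inr (a', k'), rfl, rfl, ⟨rfl, h.2⟩⟩⟩
    show Quot.mk _ _ = Quot.mk _ (Sum.inl b)
    rw [h.1]
    exact (Quot.sound ⟨a', rfl, rfl⟩).symm
  · refine ⟨Sum.inr (Sum.inr (a, k)), Sum.inr (Sum.inl a), rfl, ?_,
      Or.inr ⟨Sum.inr (a, k), Sum.inl a, rfl, rfl, ⟨rfl, h.2⟩⟩⟩
    show Quot.mk _ _ = Quot.mk _ (Sum.inl b')
    rw [h.1]
    exact (Quot.sound ⟨a, rfl, rfl⟩).symm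
  · exact ⟨Sum.inr (Sum.inr (a, k)), Sum.inr (Sum.inr (a', k')), rfl, rfl,
      Or.inr ⟨Sum.inr (a, k), Sum.inr (a', k'), rfl, rfl, h⟩⟩

lemma phi_hom (GA : LoopGraph A) (GB : LoopGraph B) (i : A → B)
    (hind2 : ∀ a a' : A, GA.adj a a' ↔ GB.adj (i a) (i a')) :
    IsGraphHom (pushoutGraph GB (GCg GA) i Sum.inl) (GVg GB i) (phi GA GB i) := by
  rintro x y ⟨u, w, hu, hw, hsum⟩
  subst hu; subst hw
  rcases hsum with ⟨b, b', rfl, rfl, hbb⟩ | ⟨c, c', rfl, rfl, hcc⟩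
  · exact hbb
  · rcases c with a | ⟨a, k⟩ <;> rcases c' with a' | ⟨a', k'⟩
    · exact (hind2 a a').mp hcc
    · exact ⟨congrArg i hcc.1, hcc.2⟩
    · exact ⟨congrArg i hcc.1, hcc.2⟩
    · exact hcc

lemma jm_hom (GA : LoopGraph A) (GB : LoopGraph B) (i : A → B)
    (hind2 : ∀ a a' : A, GA.adj a a' ↔ GB.adj (i a) (i a')) :
    IsGraphHom (GCg GA) (GVg GB i) (jm i) := by
  rintro (a | ⟨a, k⟩) (a' | ⟨a', k'⟩) h
  · exact (hind2 a a').mp h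
  · exact ⟨congrArg i h.1, h.2⟩
  · exact ⟨congrArg i h.1, h.2⟩
  · exact h

lemma transfer (GA : LoopGraph A) (GB : LoopGraph B) (i : A → B)
    (hind2 : ∀ a a' : A, GA.adj a a' ↔ GB.adj (i a) (i a')) :
    IsHtpyEquiv (GCg GA) (pushoutGraph GB (GCg GA) i Sum.inl)
      (cobase i (Sum.inl : A → A ⊕ A × Fin 5)) →
    IsHtpyEquiv (GCg GA) (GVg GB i) (jm i) := by
  rintro ⟨hcb, r0, hr0, hCC, hGG⟩
  refine ⟨jm_hom GA GB i hind2, r0 ∘ psi GA GB i,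
    fun x y h => hr0 (psi_hom GA GB i h), ?_, ?_⟩
  · have he : (r0 ∘ psi GA GB i) ∘ jm i = r0 ∘ cobase i Sum.inl :=
      funext fun c => congrArg r0 (cobase_eq GA GB i c).symm
    rw [he]; exact hCC
  · obtain ⟨nh, F, Fhom, F0, Flast⟩ := hGG
    refine ⟨nh, fun p => phi GA GB i (F (psi GA GB i p.1, p.2)), ?_, ?_, ?_⟩
    · intro p q hpq
      exact phi_hom GA GB i hind2 (Fhom ⟨psi_hom GA GB i hpq.1, hpq.2⟩)
    · intro x
      show phi GA GB i (F (psi GA GB i x, 0)) = _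
      rw [F0]
      show phi GA GB i (cobase i Sum.inl (r0 (psi GA GB i x))) = _
      rw [phi_cobase]
      rfl
    · intro x
      show phi GA GB i (F (psi GA GB i x, Fin.last nh)) = _
      rw [Flast]
      exact phi_psi GA GB i x

end Stmt14Aux
/-- if `i : A → B` is an induced subgraph inclusion and a ×-homotopy equivalence
of finite graphs with `|V(A)| < |V(B)|`, and `B` cannot be reduced to `A` by relative folds
with respect to `A`, then some cobase change of `i` fails to be a ×-homotopy equivalence. -/
theorem stmt14 {A B : Type} [Fintype A] [Fintype B] (GA : LoopGraph A) (GB : LoopGraph B)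
    (i : A → B)
    (hind : Function.Injective i ∧ ∀ a a' : A, GA.adj a a' ↔ GB.adj (i a) (i a'))
    (hhe : IsHtpyEquiv GA GB i)
    (hcard : Fintype.card A < Fintype.card B)
    (hnofold : ¬ RelFoldsTo GB (Set.range i) (Set.range i)) :
    ∃ (C : Type) (GC : LoopGraph C) (f : A → C), IsGraphHom GA GC f ∧
      ¬ IsHtpyEquiv GC (pushoutGraph GB GC i f) (cobase i f) := by
  obtain ⟨ihom, g, ghom, hAA, hBB⟩ := hhe
  refine ⟨A ⊕ A × Fin 5, Stmt14Aux.GCg GA, Sum.inl, fun x y h => h, ?_⟩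
  intro hP
  exact Stmt14Aux.no_hje GA GB i g hBB hnofold
    (Stmt14Aux.transfer GA GB i hind.2 hP)
end

section
/- Let t ≥ 2 and let B be a finite connected non-bipartite graph (i.e. B contains a closed walk of odd length) whose diameter is at most t − 2. Then for every edge b₁b₂ ∈ E(B) there is no graph map F : B → L_t with F(b₁) = t and F(b₂) = t − 1. -/
/-- if `t ≥ 2` and `B` is a finite connected non-bipartite graph of diameter at
most `t - 2`, then for any edge `b₁b₂` of `B` there is no graph map `F : B → L_t` with
`F b₁ = t` and `F b₂ = t - 1`. -/
theorem stmt16 (t : ℕ) (ht : 2 ≤ t) {V : Type} [Fintype V] (GB : LoopGraph V)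
    (hconn : GB.Connected)
    (hodd : ∃ (k : ℕ) (c : ℕ → V), c 0 = c (2 * k + 1) ∧
      ∀ j < 2 * k + 1, GB.adj (c j) (c (j + 1)))
    (hdiam : ∀ x y : V, ∃ (m : ℕ) (c : ℕ → V), m ≤ t - 2 ∧ c 0 = x ∧ c m = y ∧
      ∀ j < m, GB.adj (c j) (c (j + 1)))
    (b₁ b₂ : V) (hb : GB.adj b₁ b₂) :
    ¬ ∃ F : V → Fin (t + 1), IsGraphHom GB (Lgraph t) F ∧
      (F b₁ : ℕ) = t ∧ (F b₂ : ℕ) = t - 1 := by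
  rintro ⟨F, hF, h1, _⟩
  -- every vertex has F-value ≥ 1
  have hpos : ∀ y : V, 1 ≤ (F y : ℕ) := by
    intro y
    obtain ⟨m, c, hm, hc0, hcm, hw⟩ := hdiam b₁ y
    have key : ∀ j ≤ m, t ≤ (F (c j) : ℕ) + j := by
      intro j hj
      induction j with
      | zero => simp [hc0, h1]
      | succ j ih =>
        have hjm : j < m := by omega
        have ih' := ih (le_of_lt hjm)
        have hadj := hF (hw j hjm)
        rcases hadj with (h | h) | ⟨h0, _⟩
        · omega
        · have : j < t := by omega
          omega
        · omega
    have := key m le_rfl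
    rw [hcm] at this
    omega
  -- parity flips along every edge
  have hflip : ∀ x y : V, GB.adj x y → (F x : ℕ) % 2 ≠ (F y : ℕ) % 2 := by
    intro x y hxy
    have := hF hxy
    have hx := hpos x
    rcases this with (h | h) | ⟨h0, _⟩ <;> omega
  obtain ⟨k, c, hclose, hw⟩ := hodd
  have par : ∀ j ≤ 2 * k + 1, (F (c j) : ℕ) % 2 = ((F (c 0) : ℕ) + j) % 2 := by
    intro j hj
    induction j with
    | zero => rfl
    | succ j ih =>
      have hjm : j < 2 * k + 1 := by omega
      have ih' := ih (le_of_lt hjm)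
      have := hflip _ _ (hw j hjm)
      omega
  have := par (2 * k + 1) le_rfl
  rw [← hclose] at this
  omega
end
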